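/- Let A₊, A₋ > 0, γ, Γ > 1, and fix A, B ≥ 0 with A + B = 1. Define p(z) = P(Az, Bz) for z ≥ 0, where P is the two-fluid pressure with P(n,ρ) = A₊ρ₊(n,ρ)^γ and the implicit constraint. Assume the differentiation formulas ∂P/∂n = A₊γρ₊^(γ-1)·(A₋/A₊)^(1/Γ)ρ₊^(1-γ/Γ)/((γ/Γ)(1-α)+α) and ∂P/∂ρ = A₊γρ₊^(γ-1)/((γ/Γ)(1-α)+α), together with the pressure equivalence (1/C₀)(n^Γ+ρ^γ) ≤ P ≤ C₀(n^Γ+ρ^γ). Then there is a constant C₂ > 0 depending only on A₊, A₋, Γ, γ such that p'(z) ≥ C₂(A^Γ z^(Γ-1) + B^γ z^(γ-1)) for all z > 0. -/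

import Mathlib

open Real

lemma rpow_lower_aux (M x r s t e : ℝ) (hM : 0 ≤ M) (hx : 0 ≤ x) (hr : 0 ≤ r)
    (h : x ^ s ≤ M * r ^ t) (he : 0 ≤ e) :
    x ^ (s * e) ≤ M ^ e * r ^ (t * e) := by
  rw [Real.rpow_mul hx, Real.rpow_mul hr]
  calc (x ^ s) ^ e ≤ (M * r ^ t) ^ e :=
        Real.rpow_le_rpow (Real.rpow_nonneg hx s) h he
    _ = M ^ e * (r ^ t) ^ e := Real.mul_rpow hM (Real.rpow_nonneg hr t)

theorem stmt_11 (Ap Am Γ γ C₀ : ℝ)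
    (hAp : 0 < Ap) (hAm : 0 < Am) (hΓ : 1 < Γ) (hγ : 1 < γ) (hC₀ : 1 ≤ C₀)
    (ρplus alp : ℝ → ℝ → ℝ) (Pn Pρ : ℝ → ℝ → ℝ)
    (A B : ℝ) (hA : 0 ≤ A) (hB : 0 ≤ B) (hAB : A + B = 1)
    (p : ℝ → ℝ) (hp : ∀ z : ℝ, p z = Ap * (ρplus (A * z) (B * z)) ^ γ)
    (hρplus : ∀ n ρ : ℝ, 0 ≤ n → 0 ≤ ρ → 0 < n + ρ → 0 < ρplus n ρ)
    (halp : ∀ n ρ : ℝ, 0 ≤ n → 0 ≤ ρ → 0 < n + ρ →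
      0 ≤ alp n ρ ∧ alp n ρ ≤ 1)
    (hPn : ∀ n ρ : ℝ, 0 ≤ n → 0 ≤ ρ → 0 < n + ρ →
      Pn n ρ = Ap * γ * (ρplus n ρ) ^ (γ - 1) *
        ((Am / Ap) ^ (1 / Γ) * (ρplus n ρ) ^ (1 - γ / Γ)) /
          ((γ / Γ) * (1 - alp n ρ) + alp n ρ))
    (hPρ : ∀ n ρ : ℝ, 0 ≤ n → 0 ≤ ρ → 0 < n + ρ →
      Pρ n ρ = Ap * γ * (ρplus n ρ) ^ (γ - 1) /
        ((γ / Γ) * (1 - alp n ρ) + alp n ρ))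
    (hequiv : ∀ n ρ : ℝ, 0 ≤ n → 0 ≤ ρ → 0 < n + ρ →
      (1 / C₀) * (n ^ Γ + ρ ^ γ) ≤ Ap * (ρplus n ρ) ^ γ ∧
        Ap * (ρplus n ρ) ^ γ ≤ C₀ * (n ^ Γ + ρ ^ γ))
    (hchain : ∀ z : ℝ, 0 < z →
      HasDerivAt p (Pn (A * z) (B * z) * A + Pρ (A * z) (B * z) * B) z) :
    ∃ C₂ : ℝ, 0 < C₂ ∧ ∀ z : ℝ, 0 < z →
      C₂ * (A ^ Γ * z ^ (Γ - 1) + B ^ γ * z ^ (γ - 1)) ≤ deriv p z := by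
  have hγ0 : 0 < γ := by linarith
  have hΓ0 : 0 < Γ := by linarith
  have hC0 : (0:ℝ) < C₀ := by linarith
  have hc : 0 < γ / Γ := div_pos hγ0 hΓ0
  have hΓne : Γ ≠ 0 := ne_of_gt hΓ0
  have hγne : γ ≠ 0 := ne_of_gt hγ0
  obtain ⟨K, hKdef⟩ : ∃ K : ℝ, K = C₀ * Ap := ⟨_, rfl⟩
  have hK : 0 < K := by rw [hKdef]; exact mul_pos hC0 hAp
  obtain ⟨e1, he1def⟩ : ∃ e : ℝ, e = (Γ - 1) / Γ := ⟨_, rfl⟩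
  obtain ⟨e2, he2def⟩ : ∃ e : ℝ, e = (γ - 1) / γ := ⟨_, rfl⟩
  have he1 : 0 ≤ e1 := by rw [he1def]; exact div_nonneg (by linarith) hΓ0.le
  have he2 : 0 ≤ e2 := by rw [he2def]; exact div_nonneg (by linarith) hγ0.le
  obtain ⟨cn, hcndef⟩ : ∃ c : ℝ, c = (Am / Ap) ^ (1 / Γ) := ⟨_, rfl⟩
  have hcn : 0 < cn := by
    rw [hcndef]; exact Real.rpow_pos_of_pos (div_pos hAm hAp) _
  obtain ⟨c1, hc1def⟩ : ∃ c : ℝ, c = Ap * γ / (γ / Γ + 1) := ⟨_, rfl⟩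
  have hc1 : 0 < c1 := by
    rw [hc1def]; exact div_pos (mul_pos hAp hγ0) (by linarith)
  obtain ⟨M1, hM1def⟩ : ∃ M : ℝ, M = cn * K ^ (-e1) := ⟨_, rfl⟩
  obtain ⟨M2, hM2def⟩ : ∃ M : ℝ, M = K ^ (-e2) := ⟨_, rfl⟩
  have hM1 : 0 < M1 := by
    rw [hM1def]; exact mul_pos hcn (Real.rpow_pos_of_pos hK _)
  have hM2 : 0 < M2 := by rw [hM2def]; exact Real.rpow_pos_of_pos hK _
  refine ⟨c1 * min M1 M2, mul_pos hc1 (lt_min hM1 hM2), ?_⟩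
  intro z hz
  obtain ⟨n, hndef⟩ : ∃ n : ℝ, n = A * z := ⟨_, rfl⟩
  obtain ⟨ρ, hρdef⟩ : ∃ ρ : ℝ, ρ = B * z := ⟨_, rfl⟩
  have hn : 0 ≤ n := by rw [hndef]; exact mul_nonneg hA hz.le
  have hρ : 0 ≤ ρ := by rw [hρdef]; exact mul_nonneg hB hz.le
  have hnr : n + ρ = z := by rw [hndef, hρdef, ← add_mul, hAB, one_mul]
  have hsum : 0 < n + ρ := by rw [hnr]; exact hz
  obtain ⟨r, hrdef⟩ : ∃ r : ℝ, r = ρplus n ρ := ⟨_, rfl⟩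
  have hr : 0 < r := by rw [hrdef]; exact hρplus n ρ hn hρ hsum
  obtain ⟨α, hαdef⟩ : ∃ a : ℝ, a = alp n ρ := ⟨_, rfl⟩
  obtain ⟨hα0, hα1⟩ : 0 ≤ α ∧ α ≤ 1 := by rw [hαdef]; exact halp n ρ hn hρ hsum
  obtain ⟨D, hDdef⟩ : ∃ d : ℝ, d = (γ / Γ) * (1 - α) + α := ⟨_, rfl⟩
  have hD0 : 0 < D := by
    rw [hDdef]
    rcases le_total (γ / Γ) 1 with h | h
    · linarith [mul_nonneg (sub_nonneg.mpr h) hα0, hc]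
    · linarith [mul_nonneg (sub_nonneg.mpr h) (sub_nonneg.mpr hα1)]
  have hDle : D ≤ γ / Γ + 1 := by
    rw [hDdef]
    linarith [mul_nonneg hc.le hα0, hα1]
  have hlow : (1 / C₀) * (n ^ Γ + ρ ^ γ) ≤ Ap * r ^ γ := by
    rw [hrdef]; exact (hequiv n ρ hn hρ hsum).1
  have hnΓ : 0 ≤ n ^ Γ := Real.rpow_nonneg hn Γ
  have hργ : 0 ≤ ρ ^ γ := Real.rpow_nonneg hρ γ
  have h2' : n ^ Γ + ρ ^ γ ≤ C₀ * (Ap * r ^ γ) := by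
    calc n ^ Γ + ρ ^ γ = C₀ * (1 / C₀ * (n ^ Γ + ρ ^ γ)) := by field_simp
      _ ≤ C₀ * (Ap * r ^ γ) := mul_le_mul_of_nonneg_left hlow hC0.le
  have hρle : ρ ^ γ ≤ K * r ^ γ := by rw [hKdef]; linarith [h2', hnΓ]
  have hnle : n ^ Γ ≤ K * r ^ γ := by rw [hKdef]; linarith [h2', hργ]
  -- raised comparisons
  have hE : γ * e1 = γ * (Γ - 1) / Γ := by rw [he1def, mul_div_assoc]
  have h1 : n ^ (Γ - 1) ≤ K ^ e1 * r ^ (γ * (Γ - 1) / Γ) := by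
    have := rpow_lower_aux K n r Γ γ e1 hK.le hn hr.le hnle he1
    rwa [show Γ * e1 = Γ - 1 by rw [he1def, mul_comm, div_mul_cancel₀ _ hΓne],
      hE] at this
  have h2 : ρ ^ (γ - 1) ≤ K ^ e2 * r ^ (γ - 1) := by
    have := rpow_lower_aux K ρ r γ γ e2 hK.le hρ hr.le hρle he2
    rwa [show γ * e2 = γ - 1 by rw [he2def, mul_comm, div_mul_cancel₀ _ hγne]]
      at this
  have hKm : ∀ e : ℝ, K ^ (-e) * K ^ e = 1 := by
    intro e
    rw [← Real.rpow_add hK]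
    simp
  have hr1 : K ^ (-e1) * n ^ (Γ - 1) ≤ r ^ (γ * (Γ - 1) / Γ) := by
    calc K ^ (-e1) * n ^ (Γ - 1)
        ≤ K ^ (-e1) * (K ^ e1 * r ^ (γ * (Γ - 1) / Γ)) :=
          mul_le_mul_of_nonneg_left h1 (Real.rpow_pos_of_pos hK _).le
      _ = (K ^ (-e1) * K ^ e1) * r ^ (γ * (Γ - 1) / Γ) := by ring
      _ = r ^ (γ * (Γ - 1) / Γ) := by rw [hKm]; ring
  have hr2 : K ^ (-e2) * ρ ^ (γ - 1) ≤ r ^ (γ - 1) := by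
    calc K ^ (-e2) * ρ ^ (γ - 1)
        ≤ K ^ (-e2) * (K ^ e2 * r ^ (γ - 1)) :=
          mul_le_mul_of_nonneg_left h2 (Real.rpow_pos_of_pos hK _).le
      _ = (K ^ (-e2) * K ^ e2) * r ^ (γ - 1) := by ring
      _ = r ^ (γ - 1) := by rw [hKm]; ring
  -- splitting powers of n, ρ
  have t1 : M1 * (A ^ Γ * z ^ (Γ - 1)) ≤ cn * (r ^ (γ * (Γ - 1) / Γ) * A) := by
    rcases eq_or_lt_of_le hA with hA0 | hA0
    · rw [← hA0, Real.zero_rpow hΓne]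
      simp
    · have hnsplit : n ^ (Γ - 1) = A ^ (Γ - 1) * z ^ (Γ - 1) := by
        rw [hndef, Real.mul_rpow hA hz.le]
      have hAΓ : A ^ Γ = A ^ (Γ - 1) * A := by
        rw [← Real.rpow_add_one (ne_of_gt hA0)]; ring_nf
      have hmul := mul_le_mul_of_nonneg_right hr1 hA
      rw [hnsplit] at hmul
      calc M1 * (A ^ Γ * z ^ (Γ - 1))
          = cn * (K ^ (-e1) * (A ^ (Γ - 1) * z ^ (Γ - 1)) * A) := by
            rw [hAΓ, hM1def]; ring
        _ ≤ cn * (r ^ (γ * (Γ - 1) / Γ) * A) :=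
            mul_le_mul_of_nonneg_left hmul hcn.le
  have t2 : M2 * (B ^ γ * z ^ (γ - 1)) ≤ r ^ (γ - 1) * B := by
    rcases eq_or_lt_of_le hB with hB0 | hB0
    · rw [← hB0, Real.zero_rpow hγne]
      simp
    · have hρsplit : ρ ^ (γ - 1) = B ^ (γ - 1) * z ^ (γ - 1) := by
        rw [hρdef, Real.mul_rpow hB hz.le]
      have hBγ : B ^ γ = B ^ (γ - 1) * B := by
        rw [← Real.rpow_add_one (ne_of_gt hB0)]; ring_nf
      have hmul := mul_le_mul_of_nonneg_right hr2 hB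
      rw [hρsplit] at hmul
      calc M2 * (B ^ γ * z ^ (γ - 1))
          = K ^ (-e2) * (B ^ (γ - 1) * z ^ (γ - 1)) * B := by
            rw [hBγ, hM2def]; ring
        _ ≤ r ^ (γ - 1) * B := hmul
  -- derivative value
  have hder : deriv p z = Pn (A * z) (B * z) * A + Pρ (A * z) (B * z) * B :=
    (hchain z hz).deriv
  rw [hder, ← hndef, ← hρdef, hPn n ρ hn hρ hsum, hPρ n ρ hn hρ hsum,
    ← hrdef, ← hαdef, ← hcndef, ← hDdef]
  have hexp : r ^ (γ - 1) * r ^ (1 - γ / Γ) = r ^ (γ * (Γ - 1) / Γ) := by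
    rw [← Real.rpow_add hr]
    congr 1
    field_simp
    ring
  have key : Ap * γ * r ^ (γ - 1) * (cn * r ^ (1 - γ / Γ)) / D * A
        + Ap * γ * r ^ (γ - 1) / D * B
      = (Ap * γ / D) * (cn * (r ^ (γ * (Γ - 1) / Γ) * A) + r ^ (γ - 1) * B) := by
    rw [← hexp, div_mul_eq_mul_div, div_mul_eq_mul_div, ← add_div,
      div_mul_eq_mul_div]
    congr 1
    ring
  rw [key]
  obtain ⟨X, hXdef⟩ : ∃ x : ℝ, x = A ^ Γ * z ^ (Γ - 1) := ⟨_, rfl⟩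
  obtain ⟨Y, hYdef⟩ : ∃ y : ℝ, y = B ^ γ * z ^ (γ - 1) := ⟨_, rfl⟩
  rw [← hXdef, ← hYdef]
  rw [← hXdef] at t1
  rw [← hYdef] at t2
  have hX : 0 ≤ X := by
    rw [hXdef]
    exact mul_nonneg (Real.rpow_nonneg hA _) (Real.rpow_nonneg hz.le _)
  have hY : 0 ≤ Y := by
    rw [hYdef]
    exact mul_nonneg (Real.rpow_nonneg hB _) (Real.rpow_nonneg hz.le _)
  have m1 : min M1 M2 * X ≤ M1 * X := mul_le_mul_of_nonneg_right (min_le_left _ _) hX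
  have m2 : min M1 M2 * Y ≤ M2 * Y := mul_le_mul_of_nonneg_right (min_le_right _ _) hY
  have step1 : c1 * min M1 M2 * (X + Y) ≤ c1 * (M1 * X + M2 * Y) := by
    rw [mul_assoc]
    apply mul_le_mul_of_nonneg_left _ hc1.le
    linarith [m1, m2]
  have step2 : c1 * (M1 * X + M2 * Y)
      ≤ c1 * (cn * (r ^ (γ * (Γ - 1) / Γ) * A) + r ^ (γ - 1) * B) := by
    apply mul_le_mul_of_nonneg_left _ hc1.le
    linarith [t1, t2]
  have hc1le : c1 ≤ Ap * γ / D := by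
    rw [hc1def]
    apply div_le_div_of_nonneg_left (mul_pos hAp hγ0).le hD0 hDle
  have hinner : 0 ≤ cn * (r ^ (γ * (Γ - 1) / Γ) * A) + r ^ (γ - 1) * B :=
    add_nonneg (mul_nonneg hcn.le (mul_nonneg (Real.rpow_nonneg hr.le _) hA))
      (mul_nonneg (Real.rpow_nonneg hr.le _) hB)
  have step3 : c1 * (cn * (r ^ (γ * (Γ - 1) / Γ) * A) + r ^ (γ - 1) * B)
      ≤ (Ap * γ / D) * (cn * (r ^ (γ * (Γ - 1) / Γ) * A) + r ^ (γ - 1) * B) :=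
    mul_le_mul_of_nonneg_right hc1le hinner
  linarith [step1, step2, step3]
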